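/- Let φ(x) = 1/x² + (1/x)·sin(1/x) + 2/x and ψ(x) = φ(x) - 2/x for x > 0. Then: ψ(x) ≥ 0 for all x > 0; φ(x) - ψ(x) = 2/x → +∞ as x → 0⁺; and yet liminf_{x→0⁺}(φ**(x) - ψ(x)) < +∞, where φ** is the largest convex minorant of φ. -/

import Mathlib

open Filter Set Topology

/-- `φ` admits an affine minorant on `(0,∞)`. -/
def AffBdd (φ : ℝ → ℝ) : Prop := ∃ a b : ℝ, ∀ x > 0, a * x + b ≤ φ x

/-- The biconjugate of `φ` on `(0,∞)`: the pointwise supremum of all affine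
minorants of `φ` on `(0,∞)`, i.e. the largest convex minorant of `φ`. -/
noncomputable def biconj (φ : ℝ → ℝ) (x : ℝ) : ℝ :=
  sSup {y : ℝ | ∃ a b : ℝ, (∀ t > 0, a * t + b ≤ φ t) ∧ y = a * x + b}

noncomputable def phi13 (x : ℝ) : ℝ := 1 / x ^ 2 + (1 / x) * Real.sin (1 / x) + 2 / x

noncomputable def psi13 (x : ℝ) : ℝ := phi13 x - 2 / x

lemma psi13_nonneg : ∀ x > 0, 0 ≤ psi13 x := by
  intro x hx
  have hu : 0 < 1 / x := by positivity
  set u := 1 / x with hu'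
  have hsin : -u ≤ Real.sin u := by
    rcases le_total u 1 with h | h
    · have : 0 ≤ Real.sin u :=
        Real.sin_nonneg_of_nonneg_of_le_pi hu.le (h.trans (by linarith [Real.pi_gt_three]))
      linarith
    · have := Real.neg_one_le_sin u
      linarith
  have h2 : 0 ≤ u ^ 2 + u * Real.sin u := by nlinarith
  have hx2 : (1:ℝ) / x ^ 2 = u ^ 2 := by rw [hu', div_pow, one_pow]
  simp only [psi13, phi13, ← hu', hx2]
  linarith

lemma phi13_nonneg : ∀ t > 0, 0 ≤ phi13 t := by
  intro t ht
  have h1 := psi13_nonneg t ht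
  have h2 : 0 ≤ 2 / t := by positivity
  simp only [psi13] at h1
  linarith

lemma biconj_le_combo {x1 x2 l : ℝ} (h1 : 0 < x1) (h2 : 0 < x2)
    (hl0 : 0 ≤ l) (hl1 : l ≤ 1) :
    biconj phi13 (l * x1 + (1 - l) * x2) ≤ l * phi13 x1 + (1 - l) * phi13 x2 := by
  apply csSup_le
  · exact ⟨0, 0, 0, fun t ht => by simpa using phi13_nonneg t ht, by ring⟩
  · rintro y ⟨a, b, hab, rfl⟩
    have e1 := hab x1 h1
    have e2 := hab x2 h2
    nlinarith [mul_le_mul_of_nonneg_left e1 hl0,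
      mul_le_mul_of_nonneg_left e2 (by linarith : (0:ℝ) ≤ 1 - l)]

lemma phi13_inv (u : ℝ) (hu : 0 < u) :
    phi13 (1 / u) = u ^ 2 + u * Real.sin u + 2 * u := by
  rw [phi13, one_div_one_div]
  field_simp

lemma sin_3pi2 : Real.sin (3 * Real.pi / 2) = -1 := by
  have : 3 * Real.pi / 2 = Real.pi + Real.pi / 2 := by ring
  rw [this, Real.sin_add]
  simp

lemma key (k : ℕ) :
    biconj phi13 (1 / (3 * Real.pi / 2 + 2 * k * Real.pi + Real.pi))
      - psi13 (1 / (3 * Real.pi / 2 + 2 * k * Real.pi + Real.pi)) ≤ 40 := by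
  have hπ := Real.pi_gt_three
  set π := Real.pi
  set u : ℝ := 3 * π / 2 + 2 * k * π with hu'
  have hk : (0:ℝ) ≤ (k:ℝ) := Nat.cast_nonneg k
  have hu : 0 < u := by positivity
  set w : ℝ := u + π with hw'
  set v : ℝ := u + 2 * π with hv'
  have hw : 0 < w := by positivity
  have hv : 0 < v := by positivity
  set l : ℝ := v / (2 * w) with hl'
  have hl0 : 0 ≤ l := by positivity
  have hl1 : l ≤ 1 := by
    rw [hl', div_le_one (by positivity)]
    simp only [hw', hv']; linarith
  -- sin values
  have hsu : Real.sin u = -1 := by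
    have : u = 3 * π / 2 + k * (2 * π) := by rw [hu']; ring
    rw [this, Real.sin_add_nat_mul_two_pi, sin_3pi2]
  have hsv : Real.sin v = -1 := by
    have : v = 3 * π / 2 + (k + 1 : ℕ) * (2 * π) := by
      rw [hv', hu']; push_cast; ring
    rw [this, Real.sin_add_nat_mul_two_pi, sin_3pi2]
  have hsw : Real.sin w = 1 := by
    have : w = π / 2 + (k + 1 : ℕ) * (2 * π) := by
      rw [hw', hu']; push_cast; ring
    rw [this, Real.sin_add_nat_mul_two_pi, Real.sin_pi_div_two]
  have hx : 1 / w = l * (1 / v) + (1 - l) * (1 / u) := by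
    rw [hl']
    field_simp
    ring
  have hb : biconj phi13 (1 / w) ≤ l * phi13 (1 / v) + (1 - l) * phi13 (1 / u) := by
    rw [hx]
    exact biconj_le_combo (by positivity) (by positivity) hl0 hl1
  have hpv : phi13 (1 / v) = v ^ 2 + v := by rw [phi13_inv v hv, hsv]; ring
  have hpu : phi13 (1 / u) = u ^ 2 + u := by rw [phi13_inv u hu, hsu]; ring
  have hpsw : psi13 (1 / w) = w ^ 2 + w := by
    rw [psi13, phi13_inv w hw, hsw, one_div, div_inv_eq_mul]; ring
  rw [hpv, hpu] at hb
  rw [hpsw]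
  have heq : l * (v ^ 2 + v) + (1 - l) * (u ^ 2 + u) - (w ^ 2 + w)
      = 3 * π ^ 2 + π ^ 2 / w := by
    rw [hl', hv', hw']
    field_simp
    ring
  have hwe : (1:ℝ) ≤ w := by simp only [hw']; linarith
  have hdiv : π ^ 2 / w ≤ π ^ 2 := div_le_self (by positivity) hwe
  have hπ2 : π < 3.15 := Real.pi_lt_d2
  have hfin : l * (v ^ 2 + v) + (1 - l) * (u ^ 2 + u) - (w ^ 2 + w) ≤ 40 := by
    rw [heq]; nlinarith
  exact (sub_le_sub_right hb _).trans hfin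

lemma seq_tendsto :
    Tendsto (fun k : ℕ => 1 / (3 * Real.pi / 2 + 2 * k * Real.pi + Real.pi))
      atTop (𝓝[>] (0:ℝ)) := by
  have hπ := Real.pi_gt_three
  have hden : Tendsto (fun k : ℕ => 3 * Real.pi / 2 + 2 * k * Real.pi + Real.pi)
      atTop atTop := by
    apply Filter.tendsto_atTop_add_const_right
    apply Filter.tendsto_atTop_add_const_left
    have : Tendsto (fun k : ℕ => (k:ℝ)) atTop atTop := tendsto_natCast_atTop_atTop
    have h2 := this.const_mul_atTop (by linarith : (0:ℝ) < 2 * Real.pi)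
    refine h2.congr fun k => by ring
  rw [tendsto_nhdsWithin_iff]
  constructor
  · simp only [one_div]; exact hden.inv_tendsto_atTop
  · filter_upwards with k
    have hk : (0:ℝ) ≤ (k:ℝ) := Nat.cast_nonneg k
    have : (0:ℝ) < 3 * Real.pi / 2 + 2 * k * Real.pi + Real.pi := by positivity
    exact mem_Ioi.mpr (by positivity)

theorem stmt_13 :
    (∀ x > 0, 0 ≤ psi13 x) ∧
    Tendsto (fun x => phi13 x - psi13 x) (𝓝[>] (0:ℝ)) atTop ∧
    Filter.liminf (fun x => ((biconj phi13 x - psi13 x : ℝ) : EReal)) (𝓝[>] (0:ℝ)) < ⊤ := by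
  refine ⟨psi13_nonneg, ?_, ?_⟩
  · have h1 : Tendsto (fun x : ℝ => x⁻¹) (𝓝[>] (0:ℝ)) atTop := tendsto_inv_nhdsGT_zero
    have h2 := h1.const_mul_atTop (by norm_num : (0:ℝ) < 2)
    refine h2.congr fun x => ?_
    simp [psi13, phi13]
    ring
  · have hfreq : ∃ᶠ x in 𝓝[>] (0:ℝ),
        ((biconj phi13 x - psi13 x : ℝ) : EReal) ≤ ((40:ℝ) : EReal) := by
      apply seq_tendsto.frequently
      apply Filter.Frequently.of_forall
      intro k
      exact EReal.coe_le_coe_iff.mpr (key k)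
    have hle := Filter.liminf_le_of_frequently_le hfreq
    exact lt_of_le_of_lt hle (EReal.coe_lt_top 40)
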